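/- Under a simple multiple randomization design with local interference, the difference-in-means estimator τ̂ = Ȳ̄_t − Ȳ̄_c is an unbiased estimator of τ(p^B, p^S) = Ȳ̄(t) − Ȳ̄(c), and similarly the difference-in-differences estimator τ̂_direct = Ȳ̄_t − Ȳ̄_ib − Ȳ̄_is + Ȳ̄_c is unbiased for τ_direct = Ȳ̄(t) − Ȳ̄(ib) − Ȳ̄(is) + Ȳ̄(c). -/

import Mathlib

open Finset

/-- The four assignment types of a simple multiple randomization design. -/
inductive MType : Type
  | c | ib | is | t
  deriving DecidableEq

/-- Indicator that cell `(i,j)` has type `ω` given selected buyers `s` and sellers `u`. -/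
def typeInd {I J : ℕ} (ω : MType) (s : Finset (Fin I)) (u : Finset (Fin J))
    (i : Fin I) (j : Fin J) : ℝ :=
  match ω with
  | MType.t  => if i ∈ s ∧ j ∈ u then 1 else 0
  | MType.ib => if i ∈ s ∧ j ∉ u then 1 else 0
  | MType.is => if i ∉ s ∧ j ∈ u then 1 else 0
  | MType.c  => if i ∉ s ∧ j ∉ u then 1 else 0

/-- The (nonrandom) number of cells of type `ω`. -/
def Ncells (I J IT JT : ℕ) (ω : MType) : ℕ :=
  match ω with
  | MType.t  => IT * JT
  | MType.ib => IT * (J - JT)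
  | MType.is => (I - IT) * JT
  | MType.c  => (I - IT) * (J - JT)

/-- Sample average of `Y(ω)` over cells of type `ω`. -/
noncomputable def sampleAvg (I J IT JT : ℕ) (Y : MType → Fin I → Fin J → ℝ) (ω : MType)
    (s : Finset (Fin I)) (u : Finset (Fin J)) : ℝ :=
  (∑ i, ∑ j, typeInd ω s u i j * Y ω i j) / ((Ncells I J IT JT ω : ℝ))

/-- Expectation under two independent uniform fixed-size random subsets. -/
noncomputable def srsExp2 (I J IT JT : ℕ)
    (f : Finset (Fin I) → Finset (Fin J) → ℝ) : ℝ :=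
  (∑ s ∈ Finset.powersetCard IT (Finset.univ : Finset (Fin I)),
     ∑ u ∈ Finset.powersetCard JT (Finset.univ : Finset (Fin J)), f s u) /
    (((Finset.powersetCard IT (Finset.univ : Finset (Fin I))).card : ℝ) *
     ((Finset.powersetCard JT (Finset.univ : Finset (Fin J))).card : ℝ))

/-- Population average `Ȳ̄(ω)`. -/
noncomputable def popAvg (I J : ℕ) (Y : MType → Fin I → Fin J → ℝ) (ω : MType) : ℝ :=
  (∑ i, ∑ j, Y ω i j) / ((I : ℝ) * J)


lemma filter_mem_powersetCard {n : ℕ} (k : ℕ) (a : Fin n) :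
    ((powersetCard (k+1) (univ : Finset (Fin n))).filter (fun s => a ∈ s)) =
      (powersetCard k ((univ : Finset (Fin n)).erase a)).image (insert a) := by
  ext t
  simp only [mem_filter, mem_powersetCard, mem_image, subset_univ, true_and]
  constructor
  · rintro ⟨hc, ha⟩
    refine ⟨t.erase a, ⟨erase_subset_erase a (subset_univ t), ?_⟩, insert_erase ha⟩
    rw [card_erase_of_mem ha, hc]; rfl
  · rintro ⟨s, ⟨hs, hc⟩, rfl⟩
    have ha : a ∉ s := fun h => (mem_erase.mp (hs h)).1 rfl
    exact ⟨by rw [card_insert_of_notMem ha, hc], mem_insert_self a s⟩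

lemma card_filter_mem {n : ℕ} (k : ℕ) (hk : 1 ≤ k) (a : Fin n) :
    ((powersetCard k (univ : Finset (Fin n))).filter (fun s => a ∈ s)).card =
      (n-1).choose (k-1) := by
  obtain ⟨k', rfl⟩ := Nat.exists_eq_add_of_le hk
  rw [add_comm 1 k', filter_mem_powersetCard, card_image_of_injOn,
    card_powersetCard, card_erase_of_mem (mem_univ a), card_univ, Fintype.card_fin]
  · simp
  · intro s hs s' hs' h
    have h1 : a ∉ s := fun hm => (mem_erase.mp ((mem_powersetCard.mp hs).1 hm)).1 rfl
    have h2 : a ∉ s' := fun hm => (mem_erase.mp ((mem_powersetCard.mp hs').1 hm)).1 rfl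
    rw [← erase_insert h1, ← erase_insert h2, h]

lemma card_filter_not_mem {n : ℕ} (k : ℕ) (a : Fin n) :
    ((powersetCard k (univ : Finset (Fin n))).filter (fun s => a ∉ s)).card =
      (n-1).choose k := by
  have : ((powersetCard k (univ : Finset (Fin n))).filter (fun s => a ∉ s)) =
      powersetCard k ((univ : Finset (Fin n)).erase a) := by
    ext t
    simp only [mem_filter, mem_powersetCard, subset_univ, true_and, subset_erase]
    tauto
  rw [this, card_powersetCard, card_erase_of_mem (mem_univ a), card_univ, Fintype.card_fin]

lemma sum_ind_mem {n : ℕ} (k : ℕ) (hk : 1 ≤ k) (a : Fin n) :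
    ∑ s ∈ powersetCard k (univ : Finset (Fin n)), (if a ∈ s then (1:ℝ) else 0)
      = ((n-1).choose (k-1) : ℝ) := by
  rw [Finset.sum_boole, card_filter_mem k hk a]

lemma sum_ind_not_mem {n : ℕ} (k : ℕ) (a : Fin n) :
    ∑ s ∈ powersetCard k (univ : Finset (Fin n)), (if a ∉ s then (1:ℝ) else 0)
      = ((n-1).choose k : ℝ) := by
  rw [Finset.sum_boole, card_filter_not_mem k a]

lemma exp_core (I J IT JT : ℕ) (cB cS : ℝ) (NB NS : ℕ) (Z : Fin I → Fin J → ℝ)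
    (fB : Fin I → Finset (Fin I) → ℝ) (fS : Fin J → Finset (Fin J) → ℝ)
    (hfB : ∀ i, ∑ s ∈ powersetCard IT (univ : Finset (Fin I)), fB i s = cB)
    (hfS : ∀ j, ∑ u ∈ powersetCard JT (univ : Finset (Fin J)), fS j u = cS)
    (hNB : (I : ℝ) * cB = NB * (I.choose IT)) (hNS : (J : ℝ) * cS = NS * (J.choose JT))
    (hNB0 : NB ≠ 0) (hNS0 : NS ≠ 0) (hI0 : I ≠ 0) (hJ0 : J ≠ 0)
    (hITle : IT ≤ I) (hJTle : JT ≤ J) :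
    (∑ s ∈ powersetCard IT (univ : Finset (Fin I)),
      ∑ u ∈ powersetCard JT (univ : Finset (Fin J)),
        (∑ i, ∑ j, fB i s * fS j u * Z i j) / ((NB * NS : ℕ) : ℝ)) /
      (((powersetCard IT (univ : Finset (Fin I))).card : ℝ) *
       ((powersetCard JT (univ : Finset (Fin J))).card : ℝ))
      = (∑ i, ∑ j, Z i j) / ((I : ℝ) * J) := by
  have key : (∑ s ∈ powersetCard IT (univ : Finset (Fin I)),
      ∑ u ∈ powersetCard JT (univ : Finset (Fin J)),
        ∑ i, ∑ j, fB i s * fS j u * Z i j)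
      = cB * cS * ∑ i, ∑ j, Z i j := by
    calc (∑ s ∈ powersetCard IT (univ : Finset (Fin I)),
        ∑ u ∈ powersetCard JT (univ : Finset (Fin J)),
          ∑ i, ∑ j, fB i s * fS j u * Z i j)
        = ∑ s ∈ powersetCard IT (univ : Finset (Fin I)), ∑ i,
            ∑ u ∈ powersetCard JT (univ : Finset (Fin J)),
              ∑ j, fB i s * fS j u * Z i j :=
          Finset.sum_congr rfl fun s _ => Finset.sum_comm
      _ = ∑ i, ∑ s ∈ powersetCard IT (univ : Finset (Fin I)),
            ∑ u ∈ powersetCard JT (univ : Finset (Fin J)),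
              ∑ j, fB i s * fS j u * Z i j := Finset.sum_comm
      _ = ∑ i, ∑ s ∈ powersetCard IT (univ : Finset (Fin I)), ∑ j,
            ∑ u ∈ powersetCard JT (univ : Finset (Fin J)), fB i s * fS j u * Z i j :=
          Finset.sum_congr rfl fun i _ => Finset.sum_congr rfl fun s _ => Finset.sum_comm
      _ = ∑ i, ∑ j, ∑ s ∈ powersetCard IT (univ : Finset (Fin I)),
            ∑ u ∈ powersetCard JT (univ : Finset (Fin J)), fB i s * fS j u * Z i j :=
          Finset.sum_congr rfl fun i _ => Finset.sum_comm
      _ = cB * cS * ∑ i, ∑ j, Z i j := by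
          rw [Finset.mul_sum]
          refine Finset.sum_congr rfl fun i _ => ?_
          rw [Finset.mul_sum]
          refine Finset.sum_congr rfl fun j _ => ?_
          simp_rw [← Finset.sum_mul, ← Finset.mul_sum, ← Finset.sum_mul, hfB, hfS]
  simp_rw [← Finset.sum_div]
  rw [key, card_powersetCard, card_powersetCard,
    card_univ, card_univ, Fintype.card_fin, Fintype.card_fin]
  have hCB : (0:ℝ) < (I.choose IT : ℝ) := by exact_mod_cast Nat.choose_pos hITle
  have hCS : (0:ℝ) < (J.choose JT : ℝ) := by exact_mod_cast Nat.choose_pos hJTle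
  have hNB' : (0:ℝ) < ((NB:ℝ)) := by exact_mod_cast Nat.pos_of_ne_zero hNB0
  have hNS' : (0:ℝ) < ((NS:ℝ)) := by exact_mod_cast Nat.pos_of_ne_zero hNS0
  have hI' : (0:ℝ) < (I:ℝ) := by exact_mod_cast Nat.pos_of_ne_zero hI0
  have hJ' : (0:ℝ) < (J:ℝ) := by exact_mod_cast Nat.pos_of_ne_zero hJ0
  have hmul : ((I:ℝ) * cB) * ((J:ℝ) * cS) = ((NB:ℝ) * (I.choose IT)) * ((NS:ℝ) * (J.choose JT)) := by
    rw [hNB, hNS]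
  push_cast
  rw [div_div, div_eq_div_iff (by positivity) (by positivity)]
  linear_combination (∑ i, ∑ j, Z i j) * hmul

lemma nat_id1 (n k : ℕ) (h1 : 1 ≤ k) (h2 : k ≤ n) :
    n * (n-1).choose (k-1) = k * n.choose k := by
  obtain ⟨n', rfl⟩ := Nat.exists_eq_add_of_le (h1.trans h2)
  obtain ⟨k', rfl⟩ := Nat.exists_eq_add_of_le h1
  simp only [add_comm 1 n', add_comm 1 k', Nat.add_sub_cancel]
  rw [Nat.add_one_mul_choose_eq]
  ring

lemma nat_id0 (n k : ℕ) (h1 : 1 ≤ k) (h2 : k ≤ n) :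
    n * (n-1).choose k = (n - k) * n.choose k := by
  have hP : n.choose k = (n-1).choose (k-1) + (n-1).choose k := by
    obtain ⟨n', rfl⟩ := Nat.exists_eq_add_of_le (h1.trans h2)
    obtain ⟨k', rfl⟩ := Nat.exists_eq_add_of_le h1
    simp only [add_comm 1 n', add_comm 1 k', Nat.add_sub_cancel]
    exact Nat.choose_succ_succ n' k'
  have e2 : n * n.choose k = k * n.choose k + n * ((n-1).choose k) := by
    calc n * n.choose k = n * (n-1).choose (k-1) + n * ((n-1).choose k) := by
          rw [hP, Nat.mul_add]
      _ = k * n.choose k + n * ((n-1).choose k) := by rw [nat_id1 n k h1 h2]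
  rw [Nat.sub_mul]
  omega

lemma exp_sampleAvg (I J IT JT : ℕ)
    (hI : 2 ≤ I) (hJ : 2 ≤ J)
    (hIT1 : 1 ≤ IT) (hIT2 : IT ≤ I - 1) (hJT1 : 1 ≤ JT) (hJT2 : JT ≤ J - 1)
    (Y : MType → Fin I → Fin J → ℝ) (ω : MType) :
    srsExp2 I J IT JT (fun s u => sampleAvg I J IT JT Y ω s u) = popAvg I J Y ω := by
  have hITle : IT ≤ I := by omega
  have hJTle : JT ≤ J := by omega
  have hI0 : I ≠ 0 := by omega
  have hJ0 : J ≠ 0 := by omega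
  have hnb1 : (I : ℝ) * ((I-1).choose (IT-1) : ℝ) = (IT : ℝ) * (I.choose IT : ℝ) := by
    exact_mod_cast congrArg (Nat.cast : ℕ → ℝ) (nat_id1 I IT hIT1 hITle)
  have hnb0 : (I : ℝ) * ((I-1).choose IT : ℝ) = ((I - IT : ℕ) : ℝ) * (I.choose IT : ℝ) := by
    exact_mod_cast congrArg (Nat.cast : ℕ → ℝ) (nat_id0 I IT hIT1 hITle)
  have hns1 : (J : ℝ) * ((J-1).choose (JT-1) : ℝ) = (JT : ℝ) * (J.choose JT : ℝ) := by
    exact_mod_cast congrArg (Nat.cast : ℕ → ℝ) (nat_id1 J JT hJT1 hJTle)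
  have hns0 : (J : ℝ) * ((J-1).choose JT : ℝ) = ((J - JT : ℕ) : ℝ) * (J.choose JT : ℝ) := by
    exact_mod_cast congrArg (Nat.cast : ℕ → ℝ) (nat_id0 J JT hJT1 hJTle)
  unfold srsExp2 sampleAvg popAvg
  cases ω with
  | t =>
    have h : ∀ (s : Finset (Fin I)) (u : Finset (Fin J)) (i : Fin I) (j : Fin J),
        typeInd MType.t s u i j * Y MType.t i j
          = (if i ∈ s then (1:ℝ) else 0) * (if j ∈ u then (1:ℝ) else 0) * Y MType.t i j := by
      intro s u i j
      by_cases h1 : i ∈ s <;> by_cases h2 : j ∈ u <;> simp [typeInd, h1, h2]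
    simp_rw [h]
    exact exp_core I J IT JT _ _ IT JT (Y MType.t) _ _
      (fun i => sum_ind_mem IT hIT1 i) (fun j => sum_ind_mem JT hJT1 j)
      hnb1 hns1 (by omega) (by omega) hI0 hJ0 hITle hJTle
  | ib =>
    have h : ∀ (s : Finset (Fin I)) (u : Finset (Fin J)) (i : Fin I) (j : Fin J),
        typeInd MType.ib s u i j * Y MType.ib i j
          = (if i ∈ s then (1:ℝ) else 0) * (if j ∉ u then (1:ℝ) else 0) * Y MType.ib i j := by
      intro s u i j
      by_cases h1 : i ∈ s <;> by_cases h2 : j ∈ u <;> simp [typeInd, h1, h2]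
    simp_rw [h]
    exact exp_core I J IT JT _ _ IT (J - JT) (Y MType.ib) _ _
      (fun i => sum_ind_mem IT hIT1 i) (fun j => sum_ind_not_mem JT j)
      hnb1 hns0 (by omega) (by omega) hI0 hJ0 hITle hJTle
  | is =>
    have h : ∀ (s : Finset (Fin I)) (u : Finset (Fin J)) (i : Fin I) (j : Fin J),
        typeInd MType.is s u i j * Y MType.is i j
          = (if i ∉ s then (1:ℝ) else 0) * (if j ∈ u then (1:ℝ) else 0) * Y MType.is i j := by
      intro s u i j
      by_cases h1 : i ∈ s <;> by_cases h2 : j ∈ u <;> simp [typeInd, h1, h2]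
    simp_rw [h]
    exact exp_core I J IT JT _ _ (I - IT) JT (Y MType.is) _ _
      (fun i => sum_ind_not_mem IT i) (fun j => sum_ind_mem JT hJT1 j)
      hnb0 hns1 (by omega) (by omega) hI0 hJ0 hITle hJTle
  | c =>
    have h : ∀ (s : Finset (Fin I)) (u : Finset (Fin J)) (i : Fin I) (j : Fin J),
        typeInd MType.c s u i j * Y MType.c i j
          = (if i ∉ s then (1:ℝ) else 0) * (if j ∉ u then (1:ℝ) else 0) * Y MType.c i j := by
      intro s u i j
      by_cases h1 : i ∈ s <;> by_cases h2 : j ∈ u <;> simp [typeInd, h1, h2]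
    simp_rw [h]
    exact exp_core I J IT JT _ _ (I - IT) (J - JT) (Y MType.c) _ _
      (fun i => sum_ind_not_mem IT i) (fun j => sum_ind_not_mem JT j)
      hnb0 hns0 (by omega) (by omega) hI0 hJ0 hITle hJTle

lemma srsExp2_sub (I J IT JT : ℕ) (f g : Finset (Fin I) → Finset (Fin J) → ℝ) :
    srsExp2 I J IT JT (fun s u => f s u - g s u)
      = srsExp2 I J IT JT f - srsExp2 I J IT JT g := by
  unfold srsExp2
  rw [← sub_div]
  congr 1
  simp [Finset.sum_sub_distrib]

lemma srsExp2_add (I J IT JT : ℕ) (f g : Finset (Fin I) → Finset (Fin J) → ℝ) :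
    srsExp2 I J IT JT (fun s u => f s u + g s u)
      = srsExp2 I J IT JT f + srsExp2 I J IT JT g := by
  unfold srsExp2
  rw [← add_div]
  congr 1
  simp [Finset.sum_add_distrib]

/-- the difference-in-means estimator `Ȳ̄_t − Ȳ̄_c` is unbiased for
`Ȳ̄(t) − Ȳ̄(c)`, and the difference-in-differences estimator
`Ȳ̄_t − Ȳ̄_ib − Ȳ̄_is + Ȳ̄_c` is unbiased for `τ_direct`. -/
theorem smrd_spillover_estimators_unbiased (I J IT JT : ℕ)
    (hI : 2 ≤ I) (hJ : 2 ≤ J)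
    (hIT1 : 1 ≤ IT) (hIT2 : IT ≤ I - 1) (hJT1 : 1 ≤ JT) (hJT2 : JT ≤ J - 1)
    (Y : MType → Fin I → Fin J → ℝ) :
    (srsExp2 I J IT JT (fun s u =>
        sampleAvg I J IT JT Y MType.t s u - sampleAvg I J IT JT Y MType.c s u)
      = popAvg I J Y MType.t - popAvg I J Y MType.c)
    ∧
    (srsExp2 I J IT JT (fun s u =>
        sampleAvg I J IT JT Y MType.t s u - sampleAvg I J IT JT Y MType.ib s u
          - sampleAvg I J IT JT Y MType.is s u + sampleAvg I J IT JT Y MType.c s u)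
      = popAvg I J Y MType.t - popAvg I J Y MType.ib
          - popAvg I J Y MType.is + popAvg I J Y MType.c) := by
  constructor
  · rw [srsExp2_sub, exp_sampleAvg I J IT JT hI hJ hIT1 hIT2 hJT1 hJT2 Y MType.t,
      exp_sampleAvg I J IT JT hI hJ hIT1 hIT2 hJT1 hJT2 Y MType.c]
  · rw [srsExp2_add, srsExp2_sub, srsExp2_sub,
      exp_sampleAvg I J IT JT hI hJ hIT1 hIT2 hJT1 hJT2 Y MType.t,
      exp_sampleAvg I J IT JT hI hJ hIT1 hIT2 hJT1 hJT2 Y MType.c,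
      exp_sampleAvg I J IT JT hI hJ hIT1 hIT2 hJT1 hJT2 Y MType.ib,
      exp_sampleAvg I J IT JT hI hJ hIT1 hIT2 hJT1 hJT2 Y MType.is]
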